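/- Let p ∈ (1,∞), α ≥ 1 with (α = 1 and β ≤ 0) or (α > 1, β ∈ ℝ), and let ω be a majorant with lim_{t→0⁺} ω(t)/t < ∞. Let φ: 𝔻 → 𝔻 be analytic. If sup_{z∈𝔻} |φ'(z)|·ω((1-|z|²)^α (log(e/(1-|z|²)))^β)/(1-|φ(z)|²)^{1+1/p} < ∞, then the composition operator C_φ maps the harmonic Hardy space H^p_H(𝔻) boundedly into the Bloch-type space B^{α,β}_{H_ω}, i.e., there is a constant M with |f(φ(0))| + sup_{z∈𝔻} Λ_{f∘φ}(z)·ω((1-|z|²)^α(log(e/(1-|z|²)))^β) ≤ M‖f‖_p for all f ∈ H^p_H(𝔻). -/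

import Mathlib

set_option linter.unusedVariables false
set_option maxHeartbeats 1000000
open MeasureTheory intervalIntegral Metric Complex Set Real ENNReal

noncomputable def Complex.abs : AbsoluteValue ℂ ℝ := NormedField.toAbsoluteValue ℂ

lemma Complex.norm_eq_abs (z : ℂ) : ‖z‖ = Complex.abs z := rfl

lemma Complex.abs_conj (z : ℂ) : Complex.abs ((starRingEnd ℂ) z) = Complex.abs z := Complex.norm_conj z

lemma Complex.abs_ofReal (r : ℝ) : Complex.abs (r : ℂ) = |r| := Complex.norm_real r

lemma Complex.sq_abs (z : ℂ) : Complex.abs z ^ 2 = Complex.normSq z := Complex.sq_norm z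

lemma Complex.continuous_abs : Continuous (fun z : ℂ => Complex.abs z) := continuous_norm

lemma Complex.abs_two : Complex.abs 2 = 2 := Complex.norm_two

lemma Complex.abs_exp_ofReal_mul_I (x : ℝ) : Complex.abs (Complex.exp (x * I)) = 1 :=
  Complex.norm_exp_ofReal_mul_I x

lemma Complex.abs_mul_exp_arg_mul_I (x : ℂ) : ↑(Complex.abs x) * Complex.exp (arg x * I) = x :=
  Complex.norm_mul_exp_arg_mul_I x

lemma abs_circleMap_zero (R θ : ℝ) : Complex.abs (circleMap 0 R θ) = |R| := norm_circleMap_zero R θ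

lemma base1 {r : ℝ} {F : ℂ → ℂ} (hF : DiffContOnCl ℂ F (ball 0 r))
    {w : ℂ} (hw : w ∈ ball (0:ℂ) r) :
    ∫ θ in (0:ℝ)..2*π, circleMap 0 r θ * (circleMap 0 r θ - w)⁻¹ * F (circleMap 0 r θ)
      = 2 * π * F w := by
  have h := hF.circleIntegral_sub_inv_smul hw
  rw [circleIntegral] at h
  simp only [deriv_circleMap, smul_eq_mul] at h
  have heq : ∀ θ ∈ Set.uIcc (0:ℝ) (2*π), circleMap 0 r θ * I * ((circleMap 0 r θ - w)⁻¹ * F (circleMap 0 r θ))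
      = I * (circleMap 0 r θ * (circleMap 0 r θ - w)⁻¹ * F (circleMap 0 r θ)) := by
    intro θ _; ring
  rw [intervalIntegral.integral_congr heq, intervalIntegral.integral_const_mul] at h
  refine mul_left_cancel₀ I_ne_zero ?_
  rw [h]; ring

lemma base2 {r : ℝ} (hr1 : r < 1) {F : ℂ → ℂ} (hF : DifferentiableOn ℂ F (ball 0 1))
    {w : ℂ} (hw : w ∈ ball (0:ℂ) r) :
    ∫ θ in (0:ℝ)..2*π, circleMap 0 r θ * ((circleMap 0 r θ - w)^2)⁻¹ * F (circleMap 0 r θ)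
      = 2 * π * deriv F w := by
  have hc : closedBall (0:ℂ) r ⊆ ball 0 1 := by
    intro x hx
    simp only [mem_closedBall, mem_ball] at hx ⊢
    exact lt_of_le_of_lt hx hr1
  have h := Complex.two_pi_I_inv_smul_circleIntegral_sub_sq_inv_smul_of_differentiable
    isOpen_ball hc hF hw
  rw [circleIntegral] at h
  simp only [deriv_circleMap, smul_eq_mul] at h
  have heq : ∀ θ ∈ Set.uIcc (0:ℝ) (2*π), circleMap 0 r θ * I * (((circleMap 0 r θ - w)^2)⁻¹ * F (circleMap 0 r θ))
      = I * (circleMap 0 r θ * ((circleMap 0 r θ - w)^2)⁻¹ * F (circleMap 0 r θ)) := by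
    intro θ _; ring
  rw [intervalIntegral.integral_congr heq, intervalIntegral.integral_const_mul] at h
  have hπ : (π:ℂ) ≠ 0 := by exact_mod_cast Real.pi_ne_zero
  have h2 : I * (∫ θ in (0:ℝ)..2*π, circleMap 0 r θ * ((circleMap 0 r θ - w)^2)⁻¹ * F (circleMap 0 r θ)) = I * (2 * π * deriv F w) := by
    rw [← h]; field_simp
  exact mul_left_cancel₀ I_ne_zero h2

lemma iconj (f : ℝ → ℂ) : ∫ θ in (0:ℝ)..2*π, (starRingEnd ℂ) (f θ) = (starRingEnd ℂ) (∫ θ in (0:ℝ)..2*π, f θ) := by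
  rw [intervalIntegral.integral_of_le (by positivity), intervalIntegral.integral_of_le (by positivity),
    _root_.integral_conj]

lemma denom_ne {r : ℝ} (hr : 0 < r) {w ζ : ℂ} (hw : Complex.abs w < r) (hζ : Complex.abs ζ = r) :
    (r:ℂ)^2 - (starRingEnd ℂ) w * ζ ≠ 0 := by
  intro h
  have he : ((r:ℂ)^2) = (starRingEnd ℂ) w * ζ := (sub_eq_zero.mp h)
  have h2 : Complex.abs ((r:ℂ)^2) = Complex.abs w * r := by
    rw [he, map_mul, Complex.abs_conj, hζ]
  rw [map_pow, Complex.abs_ofReal, abs_of_pos hr] at h2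
  nlinarith

lemma circleMap_ne_zero' {r : ℝ} (hr : 0 < r) (θ : ℝ) : circleMap 0 r θ ≠ 0 := by
  simp [circleMap_ne_center hr.ne']

lemma conj_eq_div {r : ℝ} (hr : 0 < r) {ζ : ℂ} (hζ : Complex.abs ζ = r) :
    (starRingEnd ℂ) ζ = (r:ℂ)^2 * ζ⁻¹ := by
  have hζ0 : ζ ≠ 0 := by
    intro h; rw [h] at hζ; simp at hζ; exact hr.ne' hζ.symm
  field_simp
  rw [mul_comm, Complex.mul_conj]
  have : Complex.normSq ζ = r^2 := by rw [← Complex.sq_abs, hζ]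
  rw [this]; push_cast; ring

lemma denom_ne' {r : ℝ} (hr : 0 < r) {w ζ : ℂ} (hw : Complex.abs w < r) (hζ : Complex.abs ζ ≤ r) :
    (r:ℂ)^2 - (starRingEnd ℂ) w * ζ ≠ 0 := by
  intro h
  have he : ((r:ℂ)^2) = (starRingEnd ℂ) w * ζ := (sub_eq_zero.mp h)
  have h2 : Complex.abs ((r:ℂ)^2) = Complex.abs w * Complex.abs ζ := by
    rw [he, map_mul, Complex.abs_conj]
  rw [map_pow, Complex.abs_ofReal, abs_of_pos hr] at h2
  nlinarith [Complex.abs.nonneg w, Complex.abs.nonneg ζ]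

lemma closedBall_sub {r : ℝ} (hr1 : r < 1) : Metric.closedBall (0:ℂ) r ⊆ ball 0 1 :=
  fun x hx => by simp only [mem_closedBall, mem_ball] at hx ⊢; exact lt_of_le_of_lt hx hr1

lemma dcc_aux {r : ℝ} (hr : 0 < r) (hr1 : r < 1) {G : ℂ → ℂ}
    (hG : DifferentiableOn ℂ G (Metric.closedBall 0 r)) : DiffContOnCl ℂ G (ball 0 r) := by
  refine ⟨hG.mono ball_subset_closedBall, ?_⟩
  rw [closure_ball (0:ℂ) hr.ne']
  exact hG.continuousOn

lemma conjval {r : ℝ} (hr : 0 < r) (hr1 : r < 1) {g : ℂ → ℂ}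
    (hg : DifferentiableOn ℂ g (ball 0 1)) {w : ℂ} (hw : Complex.abs w < r) :
    ∫ θ in (0:ℝ)..2*π, circleMap 0 r θ * (circleMap 0 r θ - w)⁻¹ * (starRingEnd ℂ) (g (circleMap 0 r θ))
      = 2 * π * (starRingEnd ℂ) (g 0) := by
  set F : ℂ → ℂ := fun ζ => (r:ℂ)^2 * g ζ * ((r:ℂ)^2 - (starRingEnd ℂ) w * ζ)⁻¹ with hFdef
  have hF : DiffContOnCl ℂ F (ball 0 r) := by
    apply dcc_aux hr hr1
    apply DifferentiableOn.mul
    · exact (differentiableOn_const _).mul (hg.mono (closedBall_sub hr1))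
    · apply DifferentiableOn.inv
      · exact (differentiableOn_const _).sub ((differentiableOn_const _).mul differentiableOn_id)
      · intro ζ hζ
        exact denom_ne' hr hw (by simpa [mem_closedBall] using hζ : ‖ζ‖ ≤ r)
  have h0 : (0:ℂ) ∈ ball (0:ℂ) r := by simp [hr]
  have hbase := base1 hF h0
  have hF0 : F 0 = g 0 := by
    have hrne : ((r:ℂ)) ≠ 0 := by exact_mod_cast hr.ne'
    simp only [hFdef, mul_zero, sub_zero]
    field_simp
  have key : ∫ θ in (0:ℝ)..2*π, (starRingEnd ℂ)
      (circleMap 0 r θ * (circleMap 0 r θ - w)⁻¹ * (starRingEnd ℂ) (g (circleMap 0 r θ)))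
      = 2 * π * g 0 := by
    rw [← hF0, ← hbase]
    apply intervalIntegral.integral_congr
    intro θ _
    have hζ0 : circleMap 0 r θ ≠ 0 := circleMap_ne_zero' hr θ
    have habs : Complex.abs (circleMap 0 r θ) = r := by
      rw [abs_circleMap_zero]; exact abs_of_pos hr
    have hden : (r:ℂ)^2 - (starRingEnd ℂ) w * circleMap 0 r θ ≠ 0 :=
      denom_ne hr hw habs
    simp only [map_mul, map_inv₀, map_sub, Complex.conj_conj, Complex.conj_ofReal, sub_zero, hFdef]
    rw [conj_eq_div hr habs]
    field_simp
  calc ∫ θ in (0:ℝ)..2*π, circleMap 0 r θ * (circleMap 0 r θ - w)⁻¹ * (starRingEnd ℂ) (g (circleMap 0 r θ))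
      = ∫ θ in (0:ℝ)..2*π, (starRingEnd ℂ) ((starRingEnd ℂ)
          (circleMap 0 r θ * (circleMap 0 r θ - w)⁻¹ * (starRingEnd ℂ) (g (circleMap 0 r θ)))) := by
        simp
    _ = (starRingEnd ℂ) (∫ θ in (0:ℝ)..2*π, (starRingEnd ℂ)
          (circleMap 0 r θ * (circleMap 0 r θ - w)⁻¹ * (starRingEnd ℂ) (g (circleMap 0 r θ)))) := iconj _
    _ = (starRingEnd ℂ) (2 * π * g 0) := by rw [key]
    _ = 2 * π * (starRingEnd ℂ) (g 0) := by
        rw [map_mul, map_mul, map_ofNat, Complex.conj_ofReal]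

lemma conjderiv {r : ℝ} (hr : 0 < r) (hr1 : r < 1) {g : ℂ → ℂ}
    (hg : DifferentiableOn ℂ g (ball 0 1)) {w : ℂ} (hw : Complex.abs w < r) :
    ∫ θ in (0:ℝ)..2*π, circleMap 0 r θ * ((circleMap 0 r θ - w)^2)⁻¹ * (starRingEnd ℂ) (g (circleMap 0 r θ))
      = 0 := by
  set F : ℂ → ℂ := fun ζ => (r:ℂ)^2 * ζ * g ζ * (((r:ℂ)^2 - (starRingEnd ℂ) w * ζ)^2)⁻¹ with hFdef
  have hF : DiffContOnCl ℂ F (ball 0 r) := by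
    apply dcc_aux hr hr1
    apply DifferentiableOn.mul
    · exact ((differentiableOn_const _).mul differentiableOn_id).mul (hg.mono (closedBall_sub hr1))
    · apply DifferentiableOn.inv
      · exact ((differentiableOn_const _).sub
          ((differentiableOn_const _).mul differentiableOn_id)).pow 2
      · intro ζ hζ
        exact pow_ne_zero 2 (denom_ne' hr hw (by simpa [mem_closedBall] using hζ : ‖ζ‖ ≤ r))
  have h0 : (0:ℂ) ∈ ball (0:ℂ) r := by simp [hr]
  have hbase := base1 hF h0
  have hF0 : F 0 = 0 := by simp [hFdef]
  have key : ∫ θ in (0:ℝ)..2*π, (starRingEnd ℂ)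
      (circleMap 0 r θ * ((circleMap 0 r θ - w)^2)⁻¹ * (starRingEnd ℂ) (g (circleMap 0 r θ)))
      = 0 := by
    have key2 : ∫ θ in (0:ℝ)..2*π, (starRingEnd ℂ)
        (circleMap 0 r θ * ((circleMap 0 r θ - w)^2)⁻¹ * (starRingEnd ℂ) (g (circleMap 0 r θ)))
        = 2 * (π:ℂ) * F 0 := by
      rw [← hbase]
      apply intervalIntegral.integral_congr
      intro θ _
      have hζ0 : circleMap 0 r θ ≠ 0 := circleMap_ne_zero' hr θ
      have habs : Complex.abs (circleMap 0 r θ) = r := by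
        rw [abs_circleMap_zero]; exact abs_of_pos hr
      have hden : (r:ℂ)^2 - (starRingEnd ℂ) w * circleMap 0 r θ ≠ 0 :=
        denom_ne hr hw habs
      simp only [map_mul, map_inv₀, map_sub, map_pow, Complex.conj_conj, Complex.conj_ofReal,
        sub_zero, hFdef]
      rw [conj_eq_div hr habs]
      field_simp
    rw [key2, hF0, mul_zero]
  calc ∫ θ in (0:ℝ)..2*π, circleMap 0 r θ * ((circleMap 0 r θ - w)^2)⁻¹ * (starRingEnd ℂ) (g (circleMap 0 r θ))
      = ∫ θ in (0:ℝ)..2*π, (starRingEnd ℂ) ((starRingEnd ℂ)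
          (circleMap 0 r θ * ((circleMap 0 r θ - w)^2)⁻¹ * (starRingEnd ℂ) (g (circleMap 0 r θ)))) := by
        simp
    _ = (starRingEnd ℂ) (∫ θ in (0:ℝ)..2*π, (starRingEnd ℂ)
          (circleMap 0 r θ * ((circleMap 0 r θ - w)^2)⁻¹ * (starRingEnd ℂ) (g (circleMap 0 r θ)))) := iconj _
    _ = 0 := by rw [key]; exact map_zero _

lemma ptA_ge_a {r s θ : ℝ} (hs : 0 ≤ s) (hsr : s < r) :
    r - s ≤ Complex.abs (circleMap 0 r θ - (s:ℂ)) := by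
  have h1 : Complex.abs (circleMap 0 r θ) = r := by
    rw [abs_circleMap_zero]; exact _root_.abs_of_pos (lt_of_le_of_lt hs hsr)
  rw [← Complex.norm_eq_abs]
  calc r - s = ‖circleMap 0 r θ‖ - ‖(s:ℂ)‖ := by
        rw [Complex.norm_eq_abs, Complex.norm_eq_abs, h1, Complex.abs_ofReal,
          _root_.abs_of_nonneg hs]
    _ ≤ ‖circleMap 0 r θ - (s:ℂ)‖ := norm_sub_norm_le _ _

lemma one_sub_cos (θ : ℝ) (h0 : 0 ≤ θ) (hπ : θ ≤ π) :
    2 * θ^2 / π^2 ≤ 1 - Real.cos θ := by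
  have h1 : Real.cos θ = 2 * Real.cos (θ/2)^2 - 1 := by
    rw [show θ = 2 * (θ/2) by ring, Real.cos_two_mul]; ring_nf
  have h2 : Real.sin (θ/2)^2 + Real.cos (θ/2)^2 = 1 := Real.sin_sq_add_cos_sq _
  have hπ0 : 0 < π := Real.pi_pos
  have h3 : 2 / π * (θ/2) ≤ Real.sin (θ/2) :=
    Real.mul_le_sin (by linarith) (by linarith)
  have h4 : (2 / π * (θ/2))^2 ≤ Real.sin (θ/2)^2 :=
    pow_le_pow_left₀ (by positivity) h3 2
  have h5 : (2 / π * (θ/2))^2 = θ^2/π^2 := by field_simp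
  have h6 : θ^2/π^2 ≤ Real.sin (θ/2)^2 := h5 ▸ h4
  have h7 : 1 - Real.cos θ = 2 * Real.sin (θ/2)^2 := by linarith
  calc 2 * θ^2 / π^2 = 2 * (θ^2/π^2) := by ring
    _ ≤ 2 * Real.sin (θ/2)^2 := by linarith
    _ = 1 - Real.cos θ := h7.symm

lemma ptA_ge_theta {r s θ : ℝ} (hr : 1/2 ≤ r) (hs : 1/4 ≤ s) (hsr : s < r)
    (h0 : 0 ≤ θ) (hπ : θ ≤ π) :
    θ / 5 ≤ Complex.abs (circleMap 0 r θ - (s:ℂ)) := by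
  have hA2 : Complex.abs (circleMap 0 r θ - (s:ℂ))^2
      = (r - s)^2 + 2*r*s*(1 - Real.cos θ) := by
    rw [Complex.sq_abs, Complex.normSq_apply]
    simp [circleMap, Complex.exp_ofReal_mul_I_re, Complex.exp_ofReal_mul_I_im]
    linear_combination (r^2) * Real.sin_sq_add_cos_sq θ
  have hcos := one_sub_cos θ h0 hπ
  have hπ2 : π^2 ≤ 10 := by nlinarith [Real.pi_le_four, Real.pi_pos, Real.pi_lt_d2]
  have habs := Complex.abs.nonneg (circleMap 0 r θ - (s:ℂ))
  have hθπ : 2*θ^2/π^2 ≥ θ^2/5 := by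
    rw [ge_iff_le, div_le_div_iff₀ (by norm_num) (by positivity)]
    nlinarith
  have hrs : 1/8 ≤ r * s := by nlinarith
  have h1c : 0 ≤ 1 - Real.cos θ := by nlinarith [Real.cos_le_one θ]
  have hA2'' : (θ/5)^2 ≤ Complex.abs (circleMap 0 r θ - (s:ℂ))^2 := by
    rw [hA2]
    have : θ^2/5 ≤ 1 - Real.cos θ := le_trans (le_of_eq (by ring_nf)) (le_trans hθπ.le hcos)
    nlinarith [sq_nonneg (r - s)]
  nlinarith [hA2'', habs, h0, sq_nonneg (Complex.abs (circleMap 0 r θ - (s:ℂ)) + θ/5)]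

lemma kernel_cont {r t : ℝ} {w : ℂ} (hw : Complex.abs w < r) :
    Continuous (fun θ : ℝ => Complex.abs (circleMap 0 r θ - w) ^ (-t)) := by
  have hne : ∀ θ : ℝ, Complex.abs (circleMap 0 r θ - w) ≠ 0 := by
    intro θ
    simp only [ne_eq, map_eq_zero, sub_eq_zero]
    intro h
    rw [← h] at hw
    rw [abs_circleMap_zero] at hw
    exact absurd hw (not_lt.mpr (le_abs_self r))
  exact (Complex.continuous_abs.comp ((continuous_circleMap 0 r).sub continuous_const)).rpow_const
    (fun θ => Or.inl (hne θ))

-- real-point version of the kernel estimate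
lemma kernel_est_real {t : ℝ} (ht : 1 < t) {r s : ℝ} (hr : 1/2 ≤ r) (hr1 : r < 1)
    (hs : 0 ≤ s) (hsr : s < r) :
    ∫ θ in (0:ℝ)..2*π, Complex.abs (circleMap 0 r θ - (s:ℂ)) ^ (-t)
      ≤ (8*π + 2 + 2 * 5^t/(t-1)) * (r - s) ^ (1-t) := by
  set a := r - s with hadef
  have ha : 0 < a := by simp [hadef]; linarith
  have hπpos : 0 < π := Real.pi_pos
  have haπ : a ≤ π := by
    have : a < 1 := by simp [hadef]; linarith
    linarith [Real.pi_gt_three]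
  have hsabs : Complex.abs ((s:ℂ)) < r := by
    rw [Complex.abs_ofReal, _root_.abs_of_nonneg hs]; exact hsr
  set G : ℝ → ℝ := fun θ => Complex.abs (circleMap 0 r θ - (s:ℂ)) ^ (-t) with hGdef
  have hGcont : Continuous G := kernel_cont hsabs
  have hGnn : ∀ θ, 0 ≤ G θ := fun θ => Real.rpow_nonneg (Complex.abs.nonneg _) _
  have hGbound : ∀ θ, G θ ≤ a ^ (-t) := by
    intro θ
    exact Real.rpow_le_rpow_of_nonpos ha (ptA_ge_a hs hsr) (by linarith)
  have hat : a ^ (-t) = a ^ (1-t) * a⁻¹ := by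
    rw [← Real.rpow_neg_one a, ← Real.rpow_add ha]; congr 1; ring
  have ha1t : (0:ℝ) < a ^ (1-t) := Real.rpow_pos_of_pos ha _
  have h5t : (0:ℝ) < 5 ^ t := Real.rpow_pos_of_pos (by norm_num) _
  by_cases hcase : s ≤ 1/4
  · -- easy case : a ≥ 1/4
    have ha4 : 1/4 ≤ a := by simp [hadef]; linarith
    have h1 : ∫ θ in (0:ℝ)..2*π, G θ ≤ ∫ θ in (0:ℝ)..2*π, a ^ (-t) := by
      apply intervalIntegral.integral_mono_on (by positivity)
        (hGcont.intervalIntegrable _ _) (intervalIntegrable_const)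
      intro θ _; exact hGbound θ
    have h2 : ∫ θ in (0:ℝ)..2*π, a ^ (-t) = 2*π * a ^ (-t) := by
      rw [intervalIntegral.integral_const]; simp
    have h3 : 2*π * a ^ (-t) ≤ 8*π * a ^ (1-t) := by
      rw [hat]
      have hainv : a⁻¹ ≤ 4 := by
        rw [inv_le_comm₀ ha (by norm_num)]; linarith
      calc 2*π * (a ^ (1-t) * a⁻¹) ≤ 2*π * (a ^ (1-t) * 4) := by
            apply mul_le_mul_of_nonneg_left _ (by positivity)
            exact mul_le_mul_of_nonneg_left hainv ha1t.le
        _ = 8*π * a ^ (1-t) := by ring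
    calc ∫ θ in (0:ℝ)..2*π, G θ ≤ 2*π * a ^ (-t) := by rw [← h2]; exact h1
      _ ≤ 8*π * a ^ (1-t) := h3
      _ ≤ (8*π + 2 + 2 * 5^t/(t-1)) * a ^ (1-t) := by
          apply mul_le_mul_of_nonneg_right _ ha1t.le
          have : (0:ℝ) < 2 * 5^t/(t-1) := by
            apply div_pos (by positivity); linarith
          linarith
  · -- hard case : s ≥ 1/4
    push_neg at hcase
    -- reduce to [-π, π]
    have hper : Function.Periodic G (2*π) := by
      intro x; simp only [hGdef]; rw [periodic_circleMap]
    have hshift : ∫ θ in (0:ℝ)..2*π, G θ = ∫ θ in (-π)..π, G θ := by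
      have h := hper.intervalIntegral_add_eq (-π) 0
      rw [show -π + 2*π = π by ring, zero_add] at h
      exact h.symm
    have heven : ∀ θ, G (-θ) = G θ := by
      intro θ
      have hc : circleMap 0 r (-θ) - (s:ℂ) = (starRingEnd ℂ) (circleMap 0 r θ - (s:ℂ)) := by
        simp only [circleMap, map_sub, map_mul, Complex.conj_ofReal, zero_add]
        rw [← Complex.exp_conj]
        congr 1
        simp [Complex.conj_I]
      simp only [hGdef, hc, Complex.abs_conj]
    have hsplit : ∫ θ in (-π)..π, G θ = 2 * ∫ θ in (0:ℝ)..π, G θ := by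
      have hint : ∀ (u v : ℝ), IntervalIntegrable G volume u v :=
        fun u v => hGcont.intervalIntegrable u v
      have hneg : ∫ θ in (-π)..(0:ℝ), G θ = ∫ θ in (0:ℝ)..π, G θ := by
        have := intervalIntegral.integral_comp_neg G (a := 0) (b := π)
        rw [neg_zero] at this
        rw [← this]
        apply intervalIntegral.integral_congr
        intro x _; exact heven x
      rw [← intervalIntegral.integral_add_adjacent_intervals (hint (-π) 0) (hint 0 π), hneg]
      ring
    -- split [0, π] at a
    have hint2 : ∀ (u v : ℝ), IntervalIntegrable G volume u v :=
      fun u v => hGcont.intervalIntegrable u v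
    have hs1 : ∫ θ in (0:ℝ)..a, G θ ≤ a ^ (1-t) := by
      calc ∫ θ in (0:ℝ)..a, G θ ≤ ∫ θ in (0:ℝ)..a, a ^ (-t) := by
            apply intervalIntegral.integral_mono_on ha.le (hint2 _ _) intervalIntegrable_const
            intro θ _; exact hGbound θ
        _ = a * a ^ (-t) := by rw [intervalIntegral.integral_const]; simp [smul_eq_mul]
        _ = a ^ (1-t) := by
            rw [show (1:ℝ)-t = 1 + -t by ring, Real.rpow_add ha, Real.rpow_one]
    have hrpowint : IntervalIntegrable (fun θ : ℝ => 5^t * θ ^ (-t)) volume a π := by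
      apply ContinuousOn.intervalIntegrable
      apply ContinuousOn.mul continuousOn_const
      apply ContinuousOn.rpow_const continuousOn_id
      intro x hx
      rw [Set.uIcc_of_le haπ] at hx
      exact Or.inl (ne_of_gt (lt_of_lt_of_le ha hx.1))
    have hs2 : ∫ θ in a..π, G θ ≤ 5^t * (a ^ (1-t) / (t-1)) := by
      have hptw : ∀ θ ∈ Set.Icc a π, G θ ≤ 5^t * θ ^ (-t) := by
        intro θ hθ
        have hθ0 : 0 < θ := lt_of_lt_of_le ha hθ.1
        have hb := ptA_ge_theta hr hcase.le hsr (by linarith : (0:ℝ) ≤ θ) hθ.2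
        have h1 : G θ ≤ (θ/5) ^ (-t) :=
          Real.rpow_le_rpow_of_nonpos (by positivity) hb (by linarith)
        have h2 : (θ/5 : ℝ) ^ (-t) = 5^t * θ ^ (-t) := by
          rw [Real.div_rpow hθ0.le (by norm_num : (0:ℝ) ≤ 5), Real.rpow_neg (by norm_num : (0:ℝ) ≤ 5)]
          field_simp
        linarith [h1, h2.le]
      calc ∫ θ in a..π, G θ ≤ ∫ θ in a..π, 5^t * θ ^ (-t) := by
            apply intervalIntegral.integral_mono_on haπ (hint2 _ _) hrpowint hptw
        _ = 5^t * ∫ θ in a..π, θ ^ (-t) := intervalIntegral.integral_const_mul _ _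
        _ ≤ 5^t * (a ^ (1-t) / (t-1)) := by
            apply mul_le_mul_of_nonneg_left _ h5t.le
            rw [_root_.integral_rpow (Or.inr ⟨by intro h; rw [neg_eq_iff_eq_neg] at h; linarith,
              by rw [Set.uIcc_of_le haπ]; intro hmem; linarith [hmem.1]⟩)]
            have hπt : (0:ℝ) ≤ π ^ (-t+1) := Real.rpow_nonneg hπpos.le _
            have hat1 : a ^ (-t+1) = a ^ (1-t) := by ring_nf
            have ht1 : (0:ℝ) < t - 1 := by linarith
            have hstep : (π ^ (-t+1) - a ^ (-t+1)) / (-t+1) = (a ^ (-t+1) - π ^ (-t+1)) / (t-1) := by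
              rw [show -t+1 = -(t-1) by ring, div_neg]
              ring
            rw [hstep, hat1]
            exact (div_le_div_iff_of_pos_right ht1).mpr (by linarith)
    calc ∫ θ in (0:ℝ)..2*π, G θ = 2 * ∫ θ in (0:ℝ)..π, G θ := by rw [hshift, hsplit]
      _ = 2 * ((∫ θ in (0:ℝ)..a, G θ) + ∫ θ in a..π, G θ) := by
          rw [intervalIntegral.integral_add_adjacent_intervals (hint2 0 a) (hint2 a π)]
      _ ≤ 2 * (a ^ (1-t) + 5^t * (a ^ (1-t) / (t-1))) := by
          apply mul_le_mul_of_nonneg_left _ (by norm_num)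
          exact add_le_add hs1 hs2
      _ = (2 + 2 * 5^t/(t-1)) * a ^ (1-t) := by field_simp
      _ ≤ (8*π + 2 + 2 * 5^t/(t-1)) * a ^ (1-t) := by
          apply mul_le_mul_of_nonneg_right _ ha1t.le
          nlinarith [hπpos]

lemma kernel_est {t : ℝ} (ht : 1 < t) {r : ℝ} (hr : 1/2 ≤ r) (hr1 : r < 1) {w : ℂ}
    (hw : Complex.abs w < r) :
    ∫ θ in (0:ℝ)..2*π, Complex.abs (circleMap 0 r θ - w) ^ (-t)
      ≤ (8*π + 2 + 2 * 5^t/(t-1)) * (r - Complex.abs w) ^ (1-t) := by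
  set s := Complex.abs w with hsdef
  set φ := Complex.arg w with hφdef
  have hsr : s < r := hw
  have hs0 : 0 ≤ s := Complex.abs.nonneg w
  have hrot : ∀ θ : ℝ, Complex.abs (circleMap 0 r θ - w)
      = Complex.abs (circleMap 0 r (θ - φ) - (s:ℂ)) := by
    intro θ
    have hw' : w = (s:ℂ) * Complex.exp (φ * Complex.I) := (Complex.abs_mul_exp_arg_mul_I w).symm
    have hexp : circleMap 0 r θ - w
        = Complex.exp (φ * Complex.I) * (circleMap 0 r (θ - φ) - (s:ℂ)) := by
      rw [hw']
      simp only [circleMap, zero_add]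
      rw [mul_sub]
      congr 1
      · rw [← mul_assoc, mul_comm (Complex.exp _) ((r:ℂ)), mul_assoc, ← Complex.exp_add]
        congr 2
        push_cast
        ring
      · ring
    rw [hexp, map_mul, Complex.abs_exp_ofReal_mul_I, one_mul]
  have hcongr : ∫ θ in (0:ℝ)..2*π, Complex.abs (circleMap 0 r θ - w) ^ (-t)
      = ∫ θ in (0:ℝ)..2*π, Complex.abs (circleMap 0 r (θ - φ) - (s:ℂ)) ^ (-t) := by
    apply intervalIntegral.integral_congr
    intro θ _
    simp only
    rw [hrot θ]
  have hper : Function.Periodic (fun θ : ℝ => Complex.abs (circleMap 0 r θ - (s:ℂ)) ^ (-t)) (2*π) := by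
    intro x; simp only; rw [periodic_circleMap]
  have hshift : ∫ θ in (0:ℝ)..2*π, Complex.abs (circleMap 0 r (θ - φ) - (s:ℂ)) ^ (-t)
      = ∫ θ in (0:ℝ)..2*π, Complex.abs (circleMap 0 r θ - (s:ℂ)) ^ (-t) := by
    rw [intervalIntegral.integral_comp_sub_right (fun θ => Complex.abs (circleMap 0 r θ - (s:ℂ)) ^ (-t)) φ]
    have h := hper.intervalIntegral_add_eq (0 - φ) 0
    rw [zero_add] at h
    rw [show (0:ℝ) - φ + 2*π = 2*π - φ by ring] at h
    exact h
  rw [hcongr, hshift]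
  exact kernel_est_real ht hr hr1 hs0 hsr

lemma holder_2pi {p q : ℝ} (hpq : Real.HolderConjugate p q) {u v : ℝ → ℝ}
    (hu : Continuous u) (hv : Continuous v) (hun : ∀ θ, 0 ≤ u θ) (hvn : ∀ θ, 0 ≤ v θ) :
    ∫ θ in (0:ℝ)..2*π, u θ * v θ ≤
      (∫ θ in (0:ℝ)..2*π, u θ ^ p) ^ (1/p) * (∫ θ in (0:ℝ)..2*π, v θ ^ q) ^ (1/q) := by
  have h2π : (0:ℝ) ≤ 2*π := by positivity
  rw [intervalIntegral.integral_of_le h2π, intervalIntegral.integral_of_le h2π,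
    intervalIntegral.integral_of_le h2π]
  haveI : IsFiniteMeasure (volume.restrict (Ioc (0:ℝ) (2*π))) := by
    constructor
    rw [Measure.restrict_apply_univ, Real.volume_Ioc]
    exact ENNReal.ofReal_lt_top
  have hmem : ∀ {f : ℝ → ℝ} (hf : Continuous f) (e : ℝ≥0∞),
      MemLp f e (volume.restrict (Ioc (0:ℝ) (2*π))) := by
    intro f hf e
    obtain ⟨C, hC⟩ := (isCompact_Icc (a := (0:ℝ)) (b := 2*π)).exists_bound_of_continuousOn
      hf.continuousOn
    apply MemLp.of_bound (hf.aestronglyMeasurable.restrict) C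
    filter_upwards [ae_restrict_mem measurableSet_Ioc] with x hx
    exact hC x (Ioc_subset_Icc_self hx)
  exact integral_mul_le_Lp_mul_Lq_of_nonneg hpq
    (Filter.Eventually.of_forall hun) (Filter.Eventually.of_forall hvn)
    (hmem hu _) (hmem hv _)

lemma cont_circ {r : ℝ} (hr : 0 < r) (hr1 : r < 1) {u : ℂ → ℂ}
    (hu : DifferentiableOn ℂ u (ball 0 1)) :
    Continuous (fun θ : ℝ => u (circleMap 0 r θ)) := by
  apply hu.continuousOn.comp_continuous (continuous_circleMap 0 r)
  intro θ
  rw [mem_ball_zero_iff, Complex.norm_eq_abs, abs_circleMap_zero, _root_.abs_of_pos hr]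
  exact hr1

lemma est_main {pp q r N : ℝ} (hpq : Real.HolderConjugate pp q) (hr : 0 < r) (hr1 : r < 1)
    {h g : ℂ → ℂ} (hh : DifferentiableOn ℂ h (ball 0 1)) (hg : DifferentiableOn ℂ g (ball 0 1))
    (hN : 0 ≤ N)
    (hmean : (2*π)⁻¹ * ∫ θ in (0:ℝ)..2*π,
      Complex.abs (h (circleMap 0 r θ) + (starRingEnd ℂ) (g (circleMap 0 r θ))) ^ pp ≤ N ^ pp)
    {K : ℝ → ℂ} (hK : Continuous K) :
    Complex.abs (∫ θ in (0:ℝ)..2*π,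
        K θ * (h (circleMap 0 r θ) + (starRingEnd ℂ) (g (circleMap 0 r θ))))
      ≤ (2*π)^(1/pp) * N * (∫ θ in (0:ℝ)..2*π, Complex.abs (K θ) ^ q)^(1/q) := by
  have h2π : (0:ℝ) ≤ 2*π := by positivity
  have h2πpos : (0:ℝ) < 2*π := by positivity
  set f : ℝ → ℂ := fun θ => h (circleMap 0 r θ) + (starRingEnd ℂ) (g (circleMap 0 r θ)) with hfdef
  have hfcont : Continuous f :=
    (cont_circ hr hr1 hh).add (Complex.continuous_conj.comp (cont_circ hr hr1 hg))
  have habs : Complex.abs (∫ θ in (0:ℝ)..2*π, K θ * f θ)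
      ≤ ∫ θ in (0:ℝ)..2*π, Complex.abs (f θ) * Complex.abs (K θ) := by
    rw [← Complex.norm_eq_abs]
    calc ‖∫ θ in (0:ℝ)..2*π, K θ * f θ‖ ≤ ∫ θ in (0:ℝ)..2*π, ‖K θ * f θ‖ :=
        intervalIntegral.norm_integral_le_integral_norm h2π
      _ = ∫ θ in (0:ℝ)..2*π, Complex.abs (f θ) * Complex.abs (K θ) := by
          apply intervalIntegral.integral_congr
          intro θ _
          simp [Complex.norm_eq_abs, map_mul]
          ring
  have hhold := holder_2pi hpq (Complex.continuous_abs.comp hfcont)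
    (Complex.continuous_abs.comp hK) (fun θ => Complex.abs.nonneg _) (fun θ => Complex.abs.nonneg _)
  have hfp : (∫ θ in (0:ℝ)..2*π, Complex.abs (f θ) ^ pp) ^ (1/pp) ≤ (2*π)^(1/pp) * N := by
    have h1 : ∫ θ in (0:ℝ)..2*π, Complex.abs (f θ) ^ pp ≤ 2*π * N^pp := by
      rw [← inv_mul_le_iff₀ h2πpos] at *
      exact hmean
    have h2 : (0:ℝ) ≤ ∫ θ in (0:ℝ)..2*π, Complex.abs (f θ) ^ pp := by
      apply intervalIntegral.integral_nonneg h2π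
      intro θ _
      exact Real.rpow_nonneg (Complex.abs.nonneg _) _
    calc (∫ θ in (0:ℝ)..2*π, Complex.abs (f θ) ^ pp) ^ (1/pp)
        ≤ (2*π * N^pp) ^ (1/pp) := Real.rpow_le_rpow h2 h1 hpq.one_div_nonneg
      _ = (2*π)^(1/pp) * N := by
          rw [Real.mul_rpow h2π (Real.rpow_nonneg hN _), ← Real.rpow_mul hN,
            mul_one_div, div_self hpq.ne_zero, Real.rpow_one]
  have hKnn : (0:ℝ) ≤ (∫ θ in (0:ℝ)..2*π, Complex.abs (K θ) ^ q)^(1/q) := by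
    apply Real.rpow_nonneg
    apply intervalIntegral.integral_nonneg h2π
    intro θ _
    exact Real.rpow_nonneg (Complex.abs.nonneg _) _
  calc Complex.abs (∫ θ in (0:ℝ)..2*π, K θ * f θ)
      ≤ ∫ θ in (0:ℝ)..2*π, Complex.abs (f θ) * Complex.abs (K θ) := habs
    _ ≤ (∫ θ in (0:ℝ)..2*π, Complex.abs (f θ) ^ pp) ^ (1/pp) *
        (∫ θ in (0:ℝ)..2*π, Complex.abs (K θ) ^ q)^(1/q) := hhold
    _ ≤ (2*π)^(1/pp) * N * (∫ θ in (0:ℝ)..2*π, Complex.abs (K θ) ^ q)^(1/q) :=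
        mul_le_mul_of_nonneg_right hfp hKnn

section reps
variable {r : ℝ} {w : ℂ} {h g : ℂ → ℂ}

lemma circleMap_sub_ne {r : ℝ} {w : ℂ} (hw : Complex.abs w < r) (θ : ℝ) :
    circleMap 0 r θ - w ≠ 0 := by
  intro hc
  rw [sub_eq_zero] at hc
  rw [← hc, abs_circleMap_zero] at hw
  exact absurd hw (not_lt.mpr (le_abs_self r))

lemma K2cont (hw : Complex.abs w < r) :
    Continuous (fun θ : ℝ => circleMap 0 r θ * ((circleMap 0 r θ - w)^2)⁻¹) := by
  apply (continuous_circleMap 0 r).mul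
  apply Continuous.inv₀ (((continuous_circleMap 0 r).sub continuous_const).pow 2)
  intro θ
  exact pow_ne_zero 2 (circleMap_sub_ne hw θ)

lemma K1cont (hw : Complex.abs w < r) :
    Continuous (fun θ : ℝ => circleMap 0 r θ * (circleMap 0 r θ - w)⁻¹) := by
  apply (continuous_circleMap 0 r).mul
  apply Continuous.inv₀ ((continuous_circleMap 0 r).sub continuous_const)
  intro θ
  exact circleMap_sub_ne hw θ

lemma memball (hr : 0 < r) (hw : Complex.abs w < r) : w ∈ ball (0:ℂ) r := by
  rw [mem_ball_zero_iff, Complex.norm_eq_abs]; exact hw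

lemma D2rep (hr : 0 < r) (hr1 : r < 1) (hw : Complex.abs w < r)
    (hh : DifferentiableOn ℂ h (ball 0 1)) (hg : DifferentiableOn ℂ g (ball 0 1)) :
    ∫ θ in (0:ℝ)..2*π, (circleMap 0 r θ * ((circleMap 0 r θ - w)^2)⁻¹) *
        (h (circleMap 0 r θ) + (starRingEnd ℂ) (g (circleMap 0 r θ)))
      = 2 * π * deriv h w := by
  have hi1 : IntervalIntegrable (fun θ => circleMap 0 r θ * ((circleMap 0 r θ - w)^2)⁻¹ *
      h (circleMap 0 r θ)) volume 0 (2*π) :=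
    ((K2cont hw).mul (cont_circ hr hr1 hh)).intervalIntegrable _ _
  have hi2 : IntervalIntegrable (fun θ => circleMap 0 r θ * ((circleMap 0 r θ - w)^2)⁻¹ *
      (starRingEnd ℂ) (g (circleMap 0 r θ))) volume 0 (2*π) :=
    ((K2cont hw).mul (Complex.continuous_conj.comp (cont_circ hr hr1 hg))).intervalIntegrable _ _
  have hsplit : ∫ θ in (0:ℝ)..2*π, (circleMap 0 r θ * ((circleMap 0 r θ - w)^2)⁻¹) *
        (h (circleMap 0 r θ) + (starRingEnd ℂ) (g (circleMap 0 r θ)))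
      = (∫ θ in (0:ℝ)..2*π, circleMap 0 r θ * ((circleMap 0 r θ - w)^2)⁻¹ * h (circleMap 0 r θ))
        + ∫ θ in (0:ℝ)..2*π, circleMap 0 r θ * ((circleMap 0 r θ - w)^2)⁻¹ *
            (starRingEnd ℂ) (g (circleMap 0 r θ)) := by
    rw [← intervalIntegral.integral_add hi1 hi2]
    apply intervalIntegral.integral_congr
    intro θ _
    simp only
    ring
  rw [hsplit, base2 hr1 hh (memball hr hw), conjderiv hr hr1 hg hw, add_zero]

lemma D4rep (hr : 0 < r) (hr1 : r < 1) (hw : Complex.abs w < r)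
    (hh : DifferentiableOn ℂ h (ball 0 1)) (hg : DifferentiableOn ℂ g (ball 0 1)) :
    ∫ θ in (0:ℝ)..2*π, (circleMap 0 r θ * ((circleMap 0 r θ - w)^2)⁻¹) *
        (g (circleMap 0 r θ) + (starRingEnd ℂ) (h (circleMap 0 r θ)))
      = 2 * π * deriv g w := by
  have hi1 : IntervalIntegrable (fun θ => circleMap 0 r θ * ((circleMap 0 r θ - w)^2)⁻¹ *
      g (circleMap 0 r θ)) volume 0 (2*π) :=
    ((K2cont hw).mul (cont_circ hr hr1 hg)).intervalIntegrable _ _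
  have hi2 : IntervalIntegrable (fun θ => circleMap 0 r θ * ((circleMap 0 r θ - w)^2)⁻¹ *
      (starRingEnd ℂ) (h (circleMap 0 r θ))) volume 0 (2*π) :=
    ((K2cont hw).mul (Complex.continuous_conj.comp (cont_circ hr hr1 hh))).intervalIntegrable _ _
  have hsplit : ∫ θ in (0:ℝ)..2*π, (circleMap 0 r θ * ((circleMap 0 r θ - w)^2)⁻¹) *
        (g (circleMap 0 r θ) + (starRingEnd ℂ) (h (circleMap 0 r θ)))
      = (∫ θ in (0:ℝ)..2*π, circleMap 0 r θ * ((circleMap 0 r θ - w)^2)⁻¹ * g (circleMap 0 r θ))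
        + ∫ θ in (0:ℝ)..2*π, circleMap 0 r θ * ((circleMap 0 r θ - w)^2)⁻¹ *
            (starRingEnd ℂ) (h (circleMap 0 r θ)) := by
    rw [← intervalIntegral.integral_add hi1 hi2]
    apply intervalIntegral.integral_congr
    intro θ _
    simp only [map_add, Complex.conj_conj]
    ring
  rw [hsplit, base2 hr1 hg (memball hr hw), conjderiv hr hr1 hh hw, add_zero]

lemma D1rep (hr : 0 < r) (hr1 : r < 1) (hw : Complex.abs w < r)
    (hh : DifferentiableOn ℂ h (ball 0 1)) (hg : DifferentiableOn ℂ g (ball 0 1))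
    (hg0 : g 0 = 0) :
    ∫ θ in (0:ℝ)..2*π, (circleMap 0 r θ * (circleMap 0 r θ - w)⁻¹) *
        (h (circleMap 0 r θ) + (starRingEnd ℂ) (g (circleMap 0 r θ)))
      = 2 * π * h w := by
  have hi1 : IntervalIntegrable (fun θ => circleMap 0 r θ * (circleMap 0 r θ - w)⁻¹ *
      h (circleMap 0 r θ)) volume 0 (2*π) :=
    ((K1cont hw).mul (cont_circ hr hr1 hh)).intervalIntegrable _ _
  have hi2 : IntervalIntegrable (fun θ => circleMap 0 r θ * (circleMap 0 r θ - w)⁻¹ *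
      (starRingEnd ℂ) (g (circleMap 0 r θ))) volume 0 (2*π) :=
    ((K1cont hw).mul (Complex.continuous_conj.comp (cont_circ hr hr1 hg))).intervalIntegrable _ _
  have hsplit : ∫ θ in (0:ℝ)..2*π, (circleMap 0 r θ * (circleMap 0 r θ - w)⁻¹) *
        (h (circleMap 0 r θ) + (starRingEnd ℂ) (g (circleMap 0 r θ)))
      = (∫ θ in (0:ℝ)..2*π, circleMap 0 r θ * (circleMap 0 r θ - w)⁻¹ * h (circleMap 0 r θ))
        + ∫ θ in (0:ℝ)..2*π, circleMap 0 r θ * (circleMap 0 r θ - w)⁻¹ *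
            (starRingEnd ℂ) (g (circleMap 0 r θ)) := by
    rw [← intervalIntegral.integral_add hi1 hi2]
    apply intervalIntegral.integral_congr
    intro θ _
    simp only
    ring
  have hdcc : DiffContOnCl ℂ h (ball 0 r) := dcc_aux hr hr1 (hh.mono (closedBall_sub hr1))
  rw [hsplit, base1 hdcc (memball hr hw), conjval hr hr1 hg hw, hg0, map_zero, mul_zero, add_zero]

lemma D3rep (hr : 0 < r) (hr1 : r < 1) (hw : Complex.abs w < r)
    (hh : DifferentiableOn ℂ h (ball 0 1)) (hg : DifferentiableOn ℂ g (ball 0 1)) :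
    ∫ θ in (0:ℝ)..2*π, (circleMap 0 r θ * (circleMap 0 r θ - w)⁻¹) *
        (g (circleMap 0 r θ) + (starRingEnd ℂ) (h (circleMap 0 r θ)))
      = 2 * π * (g w + (starRingEnd ℂ) (h 0)) := by
  have hi1 : IntervalIntegrable (fun θ => circleMap 0 r θ * (circleMap 0 r θ - w)⁻¹ *
      g (circleMap 0 r θ)) volume 0 (2*π) :=
    ((K1cont hw).mul (cont_circ hr hr1 hg)).intervalIntegrable _ _
  have hi2 : IntervalIntegrable (fun θ => circleMap 0 r θ * (circleMap 0 r θ - w)⁻¹ *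
      (starRingEnd ℂ) (h (circleMap 0 r θ))) volume 0 (2*π) :=
    ((K1cont hw).mul (Complex.continuous_conj.comp (cont_circ hr hr1 hh))).intervalIntegrable _ _
  have hsplit : ∫ θ in (0:ℝ)..2*π, (circleMap 0 r θ * (circleMap 0 r θ - w)⁻¹) *
        (g (circleMap 0 r θ) + (starRingEnd ℂ) (h (circleMap 0 r θ)))
      = (∫ θ in (0:ℝ)..2*π, circleMap 0 r θ * (circleMap 0 r θ - w)⁻¹ * g (circleMap 0 r θ))
        + ∫ θ in (0:ℝ)..2*π, circleMap 0 r θ * (circleMap 0 r θ - w)⁻¹ *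
            (starRingEnd ℂ) (h (circleMap 0 r θ)) := by
    rw [← intervalIntegral.integral_add hi1 hi2]
    apply intervalIntegral.integral_congr
    intro θ _
    simp only [map_add, Complex.conj_conj]
    ring
  have hdcc : DiffContOnCl ℂ g (ball 0 r) := dcc_aux hr hr1 (hg.mono (closedBall_sub hr1))
  rw [hsplit, base1 hdcc (memball hr hw), conjval hr hr1 hh hw]
  ring
end reps

-- q-integral bound for the squared kernel
lemma K2_q_bound {q r : ℝ} (hq : 1 < q) (hr : 1/2 ≤ r) (hr1 : r < 1) {w : ℂ}
    (hw : Complex.abs w < r) :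
    ∫ θ in (0:ℝ)..2*π, Complex.abs (circleMap 0 r θ * ((circleMap 0 r θ - w)^2)⁻¹) ^ q
      ≤ (8*π + 2 + 2 * 5^(2*q)/(2*q-1)) * (r - Complex.abs w) ^ (1-2*q) := by
  have h2π : (0:ℝ) ≤ 2*π := by positivity
  have hr0 : (0:ℝ) < r := lt_of_lt_of_le (by norm_num) hr
  have hptw : ∀ θ ∈ Icc (0:ℝ) (2*π),
      Complex.abs (circleMap 0 r θ * ((circleMap 0 r θ - w)^2)⁻¹) ^ q
        ≤ Complex.abs (circleMap 0 r θ - w) ^ (-(2*q)) := by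
    intro θ _
    set A := Complex.abs (circleMap 0 r θ - w) with hAdef
    have hA0 : 0 < A := by
      rw [hAdef]
      exact AbsoluteValue.pos Complex.abs (circleMap_sub_ne hw θ)
    have h1 : Complex.abs (circleMap 0 r θ * ((circleMap 0 r θ - w)^2)⁻¹) = r * (A^2)⁻¹ := by
      rw [map_mul, map_inv₀, map_pow, abs_circleMap_zero, _root_.abs_of_pos hr0]
    have h2 : r * (A^2)⁻¹ ≤ (A^2)⁻¹ := by
      apply mul_le_of_le_one_left (by positivity) hr1.le
    have h3 : ((A^2)⁻¹ : ℝ) = A ^ (-(2:ℝ)) := by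
      rw [Real.rpow_neg hA0.le, Real.rpow_two]
    have h4 : Complex.abs (circleMap 0 r θ * ((circleMap 0 r θ - w)^2)⁻¹) ^ q
        ≤ (A ^ (-(2:ℝ))) ^ q := by
      apply Real.rpow_le_rpow (Complex.abs.nonneg _) _ (by linarith)
      rw [h1, ← h3]
      exact h2
    calc Complex.abs (circleMap 0 r θ * ((circleMap 0 r θ - w)^2)⁻¹) ^ q
        ≤ (A ^ (-(2:ℝ))) ^ q := h4
      _ = A ^ (-(2*q)) := by
          rw [← Real.rpow_mul hA0.le]
          norm_num
  have hi1 : IntervalIntegrable (fun θ =>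
      Complex.abs (circleMap 0 r θ * ((circleMap 0 r θ - w)^2)⁻¹) ^ q) volume 0 (2*π) := by
    apply Continuous.intervalIntegrable
    apply (Complex.continuous_abs.comp (K2cont hw)).rpow_const
    intro θ; right; linarith
  have hi2 : IntervalIntegrable (fun θ =>
      Complex.abs (circleMap 0 r θ - w) ^ (-(2*q))) volume 0 (2*π) :=
    (kernel_cont hw).intervalIntegrable _ _
  calc ∫ θ in (0:ℝ)..2*π, Complex.abs (circleMap 0 r θ * ((circleMap 0 r θ - w)^2)⁻¹) ^ q
      ≤ ∫ θ in (0:ℝ)..2*π, Complex.abs (circleMap 0 r θ - w) ^ (-(2*q)) :=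
        intervalIntegral.integral_mono_on h2π hi1 hi2 hptw
    _ ≤ (8*π + 2 + 2 * 5^(2*q)/(2*q-1)) * (r - Complex.abs w) ^ (1-2*q) :=
        kernel_est (by linarith) hr hr1 hw

lemma deriv_growth (pp : ℝ) (hp : 1 < pp) :
    ∃ C1 : ℝ, 0 < C1 ∧ ∀ (h g : ℂ → ℂ) (N : ℝ),
      DifferentiableOn ℂ h (ball 0 1) → DifferentiableOn ℂ g (ball 0 1) → 0 ≤ N →
      (∀ r ∈ Ioo (0:ℝ) 1, (2*π)⁻¹ * ∫ θ in (0:ℝ)..2*π,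
        Complex.abs (h (circleMap 0 r θ) + (starRingEnd ℂ) (g (circleMap 0 r θ))) ^ pp ≤ N ^ pp) →
      ∀ w : ℂ, Complex.abs w < 1 →
        Complex.abs (deriv h w) + Complex.abs (deriv g w)
          ≤ C1 * N * ((1 - Complex.abs w ^ 2) ^ (1+1/pp))⁻¹ := by
  set q := pp / (pp - 1) with hqdef
  have hpq : Real.HolderConjugate pp q := Real.HolderConjugate.conjExponent hp
  have hq1 : 1 < q := hpq.symm.lt
  set C2 : ℝ := 8*π + 2 + 2 * 5^(2*q)/(2*q-1) with hC2def
  have hC2 : 0 < C2 := by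
    have h5 : (0:ℝ) < 5 ^ (2*q) := Real.rpow_pos_of_pos (by norm_num) _
    have : (0:ℝ) < 2 * 5^(2*q)/(2*q-1) := by apply div_pos (by linarith); linarith
    have := Real.pi_pos
    simp only [hC2def]
    linarith
  refine ⟨2 * ((2*π)⁻¹ * (2*π)^(1/pp) * C2^(1/q) * 16), by positivity, ?_⟩
  intro h g N hh hg hN hmean w hw
  set s := Complex.abs w with hsdef
  have hs0 : 0 ≤ s := Complex.abs.nonneg w
  set r := (1 + s)/2 with hrdef
  have hr0 : 0 < r := by simp only [hrdef]; linarith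
  have hr1 : r < 1 := by simp only [hrdef]; linarith
  have hrhalf : 1/2 ≤ r := by simp only [hrdef]; linarith
  have hsr : s < r := by simp only [hrdef]; linarith
  have h2π : (0:ℝ) < 2*π := by positivity
  have hmean' := hmean r ⟨hr0, hr1⟩
  -- the kernel q-norm bound
  have hKq : (∫ θ in (0:ℝ)..2*π, Complex.abs
      (circleMap 0 r θ * ((circleMap 0 r θ - w)^2)⁻¹) ^ q)^(1/q)
      ≤ C2^(1/q) * (16 * ((1 - s ^ 2) ^ (1+1/pp))⁻¹) := by
    have hb := K2_q_bound hq1 hrhalf hr1 hsr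
    have hint_nn : (0:ℝ) ≤ ∫ θ in (0:ℝ)..2*π, Complex.abs
        (circleMap 0 r θ * ((circleMap 0 r θ - w)^2)⁻¹) ^ q := by
      apply intervalIntegral.integral_nonneg h2π.le
      intro θ _; exact Real.rpow_nonneg (Complex.abs.nonneg _) _
    have hrs : 0 < r - s := by linarith
    have step1 : (∫ θ in (0:ℝ)..2*π, Complex.abs
        (circleMap 0 r θ * ((circleMap 0 r θ - w)^2)⁻¹) ^ q)^(1/q)
        ≤ (C2 * (r - s) ^ (1-2*q))^(1/q) :=
      Real.rpow_le_rpow hint_nn hb (by positivity)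
    have step2 : (C2 * (r - s) ^ (1-2*q))^(1/q)
        = C2^(1/q) * (r - s) ^ (-(1+1/pp)) := by
      rw [Real.mul_rpow hC2.le (Real.rpow_nonneg hrs.le _), ← Real.rpow_mul hrs.le]
      congr 1
      rw [hqdef]
      have hp0 : pp ≠ 0 := hpq.ne_zero
      have hp1 : pp - 1 ≠ 0 := sub_ne_zero.mpr (ne_of_gt hp)
      field_simp
      ring
    have step3 : (r - s) ^ (-(1+1/pp)) ≤ 16 * ((1 - s ^ 2) ^ (1+1/pp))⁻¹ := by
      have hs1 : s < 1 := hw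
      have hX : 0 < 1 - s^2 := by nlinarith
      have hquarter : (1 - s^2)/4 ≤ r - s := by simp only [hrdef]; nlinarith
      have hexp : -(1+1/pp) ≤ 0 := by
        have := hpq.one_div_nonneg; linarith
      have m1 : (r - s) ^ (-(1+1/pp)) ≤ ((1 - s^2)/4) ^ (-(1+1/pp)) :=
        Real.rpow_le_rpow_of_nonpos (by linarith) hquarter hexp
      have m2 : ((1 - s^2)/4 : ℝ) ^ (-(1+1/pp))
          = (1 - s^2) ^ (-(1+1/pp)) * 4 ^ (1+1/pp) := by
        rw [Real.div_rpow hX.le (by norm_num : (0:ℝ) ≤ 4),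
          Real.rpow_neg hX.le, Real.rpow_neg (by norm_num : (0:ℝ) ≤ 4)]
        field_simp
      have m3 : (4:ℝ) ^ (1+1/pp) ≤ 16 := by
        have h42 : (4:ℝ) ^ (2:ℝ) = 16 := by
          rw [Real.rpow_two]; norm_num
        rw [← h42]
        apply Real.rpow_le_rpow_of_exponent_le (by norm_num)
        have : 1/pp ≤ 1 := by
          rw [div_le_one (by linarith)]; linarith
        linarith
      calc (r - s) ^ (-(1+1/pp)) ≤ (1 - s^2) ^ (-(1+1/pp)) * 4 ^ (1+1/pp) := by
            rw [← m2]; exact m1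
        _ ≤ (1 - s^2) ^ (-(1+1/pp)) * 16 :=
            mul_le_mul_of_nonneg_left m3 (Real.rpow_nonneg hX.le _)
        _ = 16 * ((1 - s ^ 2) ^ (1+1/pp))⁻¹ := by
            rw [Real.rpow_neg hX.le]; ring
    calc (∫ θ in (0:ℝ)..2*π, Complex.abs
        (circleMap 0 r θ * ((circleMap 0 r θ - w)^2)⁻¹) ^ q)^(1/q)
        ≤ C2^(1/q) * (r - s) ^ (-(1+1/pp)) := by rw [← step2]; exact step1
      _ ≤ C2^(1/q) * (16 * ((1 - s ^ 2) ^ (1+1/pp))⁻¹) :=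
          mul_le_mul_of_nonneg_left step3 (Real.rpow_nonneg hC2.le _)
  -- derivative of h
  have hdh : Complex.abs (deriv h w) ≤
      (2*π)⁻¹ * ((2*π)^(1/pp) * N * (C2^(1/q) * (16 * ((1 - s ^ 2) ^ (1+1/pp))⁻¹))) := by
    have hrep := D2rep hr0 hr1 hsr hh hg
    have hest := est_main hpq hr0 hr1 hh hg hN hmean' (K2cont hsr)
    rw [hrep] at hest
    have habs2 : Complex.abs (2 * ↑π * deriv h w) = 2*π*Complex.abs (deriv h w) := by
      rw [map_mul, map_mul, Complex.abs_two, Complex.abs_ofReal, _root_.abs_of_pos Real.pi_pos]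
    rw [habs2] at hest
    have hRnn1 : (0:ℝ) ≤ (2*π)^(1/pp) * N := by positivity
    calc Complex.abs (deriv h w)
        = (2*π)⁻¹ * (2*π*Complex.abs (deriv h w)) := by field_simp
      _ ≤ (2*π)⁻¹ * ((2*π)^(1/pp) * N * (∫ θ in (0:ℝ)..2*π, Complex.abs
            (circleMap 0 r θ * ((circleMap 0 r θ - w)^2)⁻¹) ^ q)^(1/q)) :=
          mul_le_mul_of_nonneg_left hest (by positivity)
      _ ≤ (2*π)⁻¹ * ((2*π)^(1/pp) * N * (C2^(1/q) * (16 * ((1 - s ^ 2) ^ (1+1/pp))⁻¹))) := by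
          apply mul_le_mul_of_nonneg_left _ (by positivity)
          exact mul_le_mul_of_nonneg_left hKq hRnn1
  -- derivative of g
  have hmean2 : (2*π)⁻¹ * ∫ θ in (0:ℝ)..2*π,
      Complex.abs (g (circleMap 0 r θ) + (starRingEnd ℂ) (h (circleMap 0 r θ))) ^ pp ≤ N ^ pp := by
    have hcongr : ∫ θ in (0:ℝ)..2*π,
        Complex.abs (g (circleMap 0 r θ) + (starRingEnd ℂ) (h (circleMap 0 r θ))) ^ pp
        = ∫ θ in (0:ℝ)..2*π,
        Complex.abs (h (circleMap 0 r θ) + (starRingEnd ℂ) (g (circleMap 0 r θ))) ^ pp := by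
      apply intervalIntegral.integral_congr
      intro θ _
      simp only
      congr 1
      rw [← Complex.abs_conj]
      simp only [map_add, Complex.conj_conj]
      rw [add_comm]
    rw [hcongr]
    exact hmean'
  have hdg : Complex.abs (deriv g w) ≤
      (2*π)⁻¹ * ((2*π)^(1/pp) * N * (C2^(1/q) * (16 * ((1 - s ^ 2) ^ (1+1/pp))⁻¹))) := by
    have hrep := D4rep hr0 hr1 hsr hh hg
    have hest := est_main hpq hr0 hr1 hg hh hN hmean2 (K2cont hsr)
    rw [hrep] at hest
    have habs2 : Complex.abs (2 * ↑π * deriv g w) = 2*π*Complex.abs (deriv g w) := by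
      rw [map_mul, map_mul, Complex.abs_two, Complex.abs_ofReal, _root_.abs_of_pos Real.pi_pos]
    rw [habs2] at hest
    have hRnn1 : (0:ℝ) ≤ (2*π)^(1/pp) * N := by positivity
    calc Complex.abs (deriv g w)
        = (2*π)⁻¹ * (2*π*Complex.abs (deriv g w)) := by field_simp
      _ ≤ (2*π)⁻¹ * ((2*π)^(1/pp) * N * (∫ θ in (0:ℝ)..2*π, Complex.abs
            (circleMap 0 r θ * ((circleMap 0 r θ - w)^2)⁻¹) ^ q)^(1/q)) :=
          mul_le_mul_of_nonneg_left hest (by positivity)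
      _ ≤ (2*π)⁻¹ * ((2*π)^(1/pp) * N * (C2^(1/q) * (16 * ((1 - s ^ 2) ^ (1+1/pp))⁻¹))) := by
          apply mul_le_mul_of_nonneg_left _ (by positivity)
          exact mul_le_mul_of_nonneg_left hKq hRnn1
  calc Complex.abs (deriv h w) + Complex.abs (deriv g w)
      ≤ 2 * ((2*π)⁻¹ * ((2*π)^(1/pp) * N * (C2^(1/q) * (16 * ((1 - s ^ 2) ^ (1+1/pp))⁻¹)))) := by
        linarith
    _ = 2 * ((2*π)⁻¹ * (2*π)^(1/pp) * C2^(1/q) * 16) * N * ((1 - s ^ 2) ^ (1+1/pp))⁻¹ := by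
        ring

lemma const_q_bound {q M : ℝ} (hq : 0 < q) (hM : 0 ≤ M) {v : ℝ → ℝ} (hv : Continuous v)
    (hvn : ∀ θ, 0 ≤ v θ) (hb : ∀ θ, v θ ≤ M) :
    (∫ θ in (0:ℝ)..2*π, v θ ^ q)^(1/q) ≤ (2*π)^(1/q) * M := by
  have h2π : (0:ℝ) < 2*π := by positivity
  have h1 : ∫ θ in (0:ℝ)..2*π, v θ ^ q ≤ ∫ θ in (0:ℝ)..2*π, M ^ q := by
    apply intervalIntegral.integral_mono_on h2π.le
      ((hv.rpow_const (fun x => Or.inr hq.le)).intervalIntegrable _ _) intervalIntegrable_const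
    intro θ _
    exact Real.rpow_le_rpow (hvn θ) (hb θ) hq.le
  have h2 : ∫ θ in (0:ℝ)..2*π, (M:ℝ) ^ q = 2*π * M ^ q := by
    rw [intervalIntegral.integral_const]; simp
  have h3 : (0:ℝ) ≤ ∫ θ in (0:ℝ)..2*π, v θ ^ q := by
    apply intervalIntegral.integral_nonneg h2π.le
    intro θ _; exact Real.rpow_nonneg (hvn θ) _
  calc (∫ θ in (0:ℝ)..2*π, v θ ^ q)^(1/q) ≤ (2*π * M ^ q)^(1/q) := by
        apply Real.rpow_le_rpow h3 _ (by positivity)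
        rw [← h2]; exact h1
    _ = (2*π)^(1/q) * M := by
        rw [Real.mul_rpow h2π.le (Real.rpow_nonneg hM _), ← Real.rpow_mul hM,
          mul_one_div, div_self (ne_of_gt hq), Real.rpow_one]

lemma val_est {pp q r N s : ℝ} (hpq : Real.HolderConjugate pp q) (hrs : r = (1+s)/2)
    (hs0 : 0 ≤ s) (hs1 : s < 1)
    {h g : ℂ → ℂ} (hh : DifferentiableOn ℂ h (ball 0 1)) (hg : DifferentiableOn ℂ g (ball 0 1))
    (hN : 0 ≤ N)
    (hmean : (2*π)⁻¹ * ∫ θ in (0:ℝ)..2*π,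
      Complex.abs (h (circleMap 0 r θ) + (starRingEnd ℂ) (g (circleMap 0 r θ))) ^ pp ≤ N ^ pp)
    {w' : ℂ} (hw' : Complex.abs w' ≤ s) {val : ℂ}
    (hrep : ∫ θ in (0:ℝ)..2*π, (circleMap 0 r θ * (circleMap 0 r θ - w')⁻¹) *
        (h (circleMap 0 r θ) + (starRingEnd ℂ) (g (circleMap 0 r θ))) = 2 * π * val) :
    Complex.abs val ≤ 2/(1-s) * N := by
  have h2π : (0:ℝ) < 2*π := by positivity
  have hr0 : 0 < r := by rw [hrs]; linarith
  have hr1 : r < 1 := by rw [hrs]; linarith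
  have hsr : s < r := by rw [hrs]; linarith
  have hw'r : Complex.abs w' < r := lt_of_le_of_lt hw' hsr
  have hest := est_main hpq hr0 hr1 hh hg hN hmean (K1cont hw'r)
  rw [hrep] at hest
  have habs2 : Complex.abs (2 * ↑π * val) = 2*π*Complex.abs val := by
    rw [map_mul, map_mul, Complex.abs_two, Complex.abs_ofReal, _root_.abs_of_pos Real.pi_pos]
  rw [habs2] at hest
  have hM0 : (0:ℝ) ≤ 2/(1-s) := div_nonneg (by norm_num) (by linarith)
  have hkb : ∀ θ : ℝ, Complex.abs (circleMap 0 r θ * (circleMap 0 r θ - w')⁻¹) ≤ 2/(1-s) := by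
    intro θ
    have hA : r - s ≤ Complex.abs (circleMap 0 r θ - w') := by
      calc r - s ≤ r - Complex.abs w' := by linarith
        _ = Complex.abs (circleMap 0 r θ) - Complex.abs w' := by
            rw [abs_circleMap_zero, _root_.abs_of_pos hr0]
        _ ≤ Complex.abs (circleMap 0 r θ - w') := by
            rw [← Complex.norm_eq_abs, ← Complex.norm_eq_abs, ← Complex.norm_eq_abs]
            exact norm_sub_norm_le _ _
    have hrspos : 0 < r - s := by linarith
    have hApos : 0 < Complex.abs (circleMap 0 r θ - w') := lt_of_lt_of_le hrspos hA
    rw [map_mul, map_inv₀, abs_circleMap_zero, _root_.abs_of_pos hr0]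
    have hinv : (Complex.abs (circleMap 0 r θ - w'))⁻¹ ≤ (r - s)⁻¹ :=
      inv_anti₀ hrspos hA
    have hrs2 : (r - s)⁻¹ = 2/(1-s) := by
      rw [hrs]; rw [show (1+s)/2 - s = (1-s)/2 by ring]; rw [inv_div]
    calc r * (Complex.abs (circleMap 0 r θ - w'))⁻¹ ≤ 1 * (r-s)⁻¹ := by
          apply mul_le_mul hr1.le hinv (by positivity) (by norm_num)
      _ = 2/(1-s) := by rw [one_mul, hrs2]
  have hKq := const_q_bound (lt_trans zero_lt_one hpq.symm.lt) hM0
    (Complex.continuous_abs.comp (K1cont hw'r)) (fun θ => Complex.abs.nonneg _) hkb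
  have hprod : (2*π)^(1/pp) * (2*π)^(1/q) = 2*π := by
    rw [← Real.rpow_add h2π]
    rw [one_div, one_div, hpq.inv_add_inv_eq_one, Real.rpow_one]
  have hRnn1 : (0:ℝ) ≤ (2*π)^(1/pp) * N := by positivity
  calc Complex.abs val = (2*π)⁻¹ * (2*π*Complex.abs val) := by field_simp
    _ ≤ (2*π)⁻¹ * ((2*π)^(1/pp) * N * (∫ θ in (0:ℝ)..2*π, Complex.abs
          (circleMap 0 r θ * (circleMap 0 r θ - w')⁻¹) ^ q)^(1/q)) :=
        mul_le_mul_of_nonneg_left hest (by positivity)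
    _ ≤ (2*π)⁻¹ * ((2*π)^(1/pp) * N * ((2*π)^(1/q) * (2/(1-s)))) := by
        apply mul_le_mul_of_nonneg_left _ (by positivity)
        exact mul_le_mul_of_nonneg_left hKq hRnn1
    _ = (2*π)⁻¹ * ((2*π)^(1/pp) * (2*π)^(1/q)) * (N * (2/(1-s))) := by ring
    _ = 2/(1-s) * N := by rw [hprod]; field_simp

lemma value_growth (pp : ℝ) (hp : 1 < pp) (h g : ℂ → ℂ) (N : ℝ)
    (hh : DifferentiableOn ℂ h (ball 0 1)) (hg : DifferentiableOn ℂ g (ball 0 1))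
    (hg0 : g 0 = 0) (hN : 0 ≤ N)
    (hmean : ∀ r ∈ Ioo (0:ℝ) 1, (2*π)⁻¹ * ∫ θ in (0:ℝ)..2*π,
      Complex.abs (h (circleMap 0 r θ) + (starRingEnd ℂ) (g (circleMap 0 r θ))) ^ pp ≤ N ^ pp)
    {w : ℂ} (hw : Complex.abs w < 1) :
    Complex.abs (h w + (starRingEnd ℂ) (g w)) ≤ 6/(1 - Complex.abs w) * N := by
  set q := pp / (pp - 1) with hqdef
  have hpq : Real.HolderConjugate pp q := Real.HolderConjugate.conjExponent hp
  set s := Complex.abs w with hsdef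
  have hs0 : 0 ≤ s := Complex.abs.nonneg w
  set r := (1 + s)/2 with hrdef
  have hr0 : 0 < r := by simp only [hrdef]; linarith
  have hr1 : r < 1 := by simp only [hrdef]; linarith
  have hsr : s < r := by simp only [hrdef]; linarith
  have hmean' := hmean r ⟨hr0, hr1⟩
  have hmean2 : (2*π)⁻¹ * ∫ θ in (0:ℝ)..2*π,
      Complex.abs (g (circleMap 0 r θ) + (starRingEnd ℂ) (h (circleMap 0 r θ))) ^ pp ≤ N ^ pp := by
    have hcongr : ∫ θ in (0:ℝ)..2*π,
        Complex.abs (g (circleMap 0 r θ) + (starRingEnd ℂ) (h (circleMap 0 r θ))) ^ pp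
        = ∫ θ in (0:ℝ)..2*π,
        Complex.abs (h (circleMap 0 r θ) + (starRingEnd ℂ) (g (circleMap 0 r θ))) ^ pp := by
      apply intervalIntegral.integral_congr
      intro θ _
      simp only
      congr 1
      rw [← Complex.abs_conj]
      simp only [map_add, Complex.conj_conj]
      rw [add_comm]
    rw [hcongr]
    exact hmean'
  have hbh : Complex.abs (h w) ≤ 2/(1-s) * N :=
    val_est hpq hrdef hs0 hw hh hg hN hmean' (le_refl s) (D1rep hr0 hr1 hsr hh hg hg0)
  have hbg0 : Complex.abs (g w + (starRingEnd ℂ) (h 0)) ≤ 2/(1-s) * N :=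
    val_est hpq hrdef hs0 hw hg hh hN hmean2 (le_refl s) (D3rep hr0 hr1 hsr hh hg)
  have hbh0 : Complex.abs (h 0) ≤ 2/(1-s) * N := by
    have hz : Complex.abs (0:ℂ) ≤ s := by simp [hs0]
    have hrep0 := D1rep (w := 0) hr0 hr1 (lt_of_le_of_lt hz hsr) hh hg hg0
    exact val_est hpq hrdef hs0 hw hh hg hN hmean' hz hrep0
  have hbg : Complex.abs (g w) ≤ 4/(1-s) * N := by
    calc Complex.abs (g w) = Complex.abs ((g w + (starRingEnd ℂ) (h 0)) - (starRingEnd ℂ) (h 0)) := by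
          congr 1; ring
      _ ≤ Complex.abs (g w + (starRingEnd ℂ) (h 0)) + Complex.abs ((starRingEnd ℂ) (h 0)) := by
          rw [← Complex.norm_eq_abs, ← Complex.norm_eq_abs, ← Complex.norm_eq_abs]
          exact norm_sub_le _ _
      _ ≤ 2/(1-s) * N + 2/(1-s) * N := by
          rw [Complex.abs_conj]
          exact add_le_add hbg0 hbh0
      _ = 4/(1-s) * N := by ring
  calc Complex.abs (h w + (starRingEnd ℂ) (g w))
      ≤ Complex.abs (h w) + Complex.abs ((starRingEnd ℂ) (g w)) := by
        rw [← Complex.norm_eq_abs, ← Complex.norm_eq_abs, ← Complex.norm_eq_abs]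
        exact norm_add_le _ _
    _ ≤ 2/(1-s) * N + 4/(1-s) * N := by
        rw [Complex.abs_conj]
        exact add_le_add hbh hbg
    _ = 6/(1-s) * N := by ring

theorem statement16 (p α β : ℝ) (hp : 1 < p)
    (hαβ : (α = 1 ∧ β ≤ 0) ∨ 1 < α)
    (ω : ℝ → ℝ) (hω0 : ω 0 = 0)
    (hωcont : ContinuousOn ω (Set.Ici 0))
    (hωmono : MonotoneOn ω (Set.Ici 0))
    (hωdec : ∀ s t : ℝ, 0 < s → s ≤ t → ω t / t ≤ ω s / s)
    (hωlim : ∃ L : ℝ, Filter.Tendsto (fun t => ω t / t)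
      (nhdsWithin 0 (Set.Ioi 0)) (nhds L))
    (φ : ℂ → ℂ)
    (hφa : DifferentiableOn ℂ φ (Metric.ball 0 1))
    (hφm : Set.MapsTo φ (Metric.ball 0 1) (Metric.ball 0 1))
    (hbound : ∃ K : ℝ, ∀ z ∈ Metric.ball (0 : ℂ) 1,
      ‖deriv φ z‖ *
        ω ((1 - ‖z‖ ^ 2) ^ α *
          (Real.log (Real.exp 1 / (1 - ‖z‖ ^ 2))) ^ β) /
        (1 - ‖φ z‖ ^ 2) ^ (1 + 1 / p) ≤ K) :
    ∃ M : ℝ, 0 < M ∧ ∀ (h g : ℂ → ℂ) (N : ℝ),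
      DifferentiableOn ℂ h (Metric.ball 0 1) →
      DifferentiableOn ℂ g (Metric.ball 0 1) → g 0 = 0 → 0 ≤ N →
      (∀ r ∈ Set.Ioo (0 : ℝ) 1,
        (2 * Real.pi)⁻¹ * ∫ θ in (0 : ℝ)..2 * Real.pi,
          ‖h (r * Complex.exp (θ * Complex.I)) +
            (starRingEnd ℂ) (g (r * Complex.exp (θ * Complex.I)))‖ ^ p ≤ N ^ p) →
      ∀ z ∈ Metric.ball (0 : ℂ) 1,
        ‖h (φ 0) + (starRingEnd ℂ) (g (φ 0))‖ +
          (‖deriv (h ∘ φ) z‖ + ‖deriv (g ∘ φ) z‖) *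
            ω ((1 - ‖z‖ ^ 2) ^ α *
              (Real.log (Real.exp 1 / (1 - ‖z‖ ^ 2))) ^ β) ≤ M * N := by
  
  simp only [Complex.norm_eq_abs] at hbound ⊢
  obtain ⟨K, hK⟩ := hbound
  set K0 := max K 0 with hK0def
  have hK0nn : 0 ≤ K0 := le_max_right _ _
  have hK' : ∀ z ∈ Metric.ball (0 : ℂ) 1,
      Complex.abs (deriv φ z) *
        ω ((1 - Complex.abs z ^ 2) ^ α *
          (Real.log (Real.exp 1 / (1 - Complex.abs z ^ 2))) ^ β) /
        (1 - Complex.abs (φ z) ^ 2) ^ (1 + 1 / p) ≤ K0 :=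
    fun z hz => le_trans (hK z hz) (le_max_left _ _)
  obtain ⟨C1, hC1pos, hC1⟩ := deriv_growth p hp
  have h0mem : (0:ℂ) ∈ Metric.ball (0:ℂ) 1 := by simp
  have hφ0 : φ 0 ∈ Metric.ball (0:ℂ) 1 := hφm h0mem
  have hφ0abs : Complex.abs (φ 0) < 1 := by
    rw [← Complex.norm_eq_abs, ← mem_ball_zero_iff]; exact hφ0
  set C0 : ℝ := 6/(1 - Complex.abs (φ 0)) with hC0def
  have hC0pos : 0 < C0 := by
    apply div_pos (by norm_num); linarith
  refine ⟨C0 + C1 * K0 + 1, by positivity, ?_⟩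
  intro h g N hh hg hg0 hN hmean z hz
  have hcm : ∀ (r θ : ℝ), circleMap 0 r θ = (r:ℂ) * Complex.exp ((θ:ℂ) * Complex.I) := by
    intro r θ; simp [circleMap]
  have hmean' : ∀ r ∈ Ioo (0:ℝ) 1, (2*π)⁻¹ * ∫ θ in (0:ℝ)..2*π,
      Complex.abs (h (circleMap 0 r θ) + (starRingEnd ℂ) (g (circleMap 0 r θ))) ^ p ≤ N ^ p := by
    intro r hr
    simpa only [hcm] using hmean r hr
  -- first term
  have hval : Complex.abs (h (φ 0) + (starRingEnd ℂ) (g (φ 0))) ≤ C0 * N := by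
    have := value_growth p hp h g N hh hg hg0 hN hmean' hφ0abs
    rw [hC0def]
    exact this
  -- second term
  have hzabs : Complex.abs z < 1 := by
    rw [← Complex.norm_eq_abs, ← mem_ball_zero_iff]; exact hz
  have hφz : φ z ∈ Metric.ball (0:ℂ) 1 := hφm hz
  have hφzabs : Complex.abs (φ z) < 1 := by
    rw [← Complex.norm_eq_abs, ← mem_ball_zero_iff]; exact hφz
  have hder := hC1 h g N hh hg hN hmean' (φ z) hφzabs
  have hdφ : DifferentiableAt ℂ φ z := hφa.differentiableAt (isOpen_ball.mem_nhds hz)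
  have hdh : DifferentiableAt ℂ h (φ z) := hh.differentiableAt (isOpen_ball.mem_nhds hφz)
  have hdg : DifferentiableAt ℂ g (φ z) := hg.differentiableAt (isOpen_ball.mem_nhds hφz)
  have hch : deriv (h ∘ φ) z = deriv h (φ z) * deriv φ z := deriv_comp (x := z) hdh hdφ
  have hcg : deriv (g ∘ φ) z = deriv g (φ z) * deriv φ z := deriv_comp (x := z) hdg hdφ
  set t : ℝ := (1 - Complex.abs z ^ 2) ^ α *
      (Real.log (Real.exp 1 / (1 - Complex.abs z ^ 2))) ^ β with htdef
  have hz2 : 0 < 1 - Complex.abs z ^ 2 := by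
    have := Complex.abs.nonneg z
    nlinarith
  have htpos : 0 < t := by
    rw [htdef]
    apply mul_pos (Real.rpow_pos_of_pos hz2 _)
    apply Real.rpow_pos_of_pos
    apply Real.log_pos
    rw [lt_div_iff₀ hz2]
    calc 1 * (1 - Complex.abs z ^ 2) ≤ 1 := by nlinarith [Complex.abs.nonneg z]
      _ < Real.exp 1 := by
          have := Real.exp_one_gt_d9
          linarith
  have hωt : 0 ≤ ω t := by
    rw [← hω0]
    exact hωmono (by simp) (mem_Ici.mpr htpos.le) htpos.le
  set X : ℝ := (1 - Complex.abs (φ z) ^ 2) ^ (1 + 1/p) with hXdef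
  have hXpos : 0 < X := by
    apply Real.rpow_pos_of_pos
    have := Complex.abs.nonneg (φ z)
    nlinarith
  have hb2 : Complex.abs (deriv φ z) * ω t ≤ K0 * X := by
    have := hK' z hz
    rw [div_le_iff₀ hXpos] at this
    calc Complex.abs (deriv φ z) * ω t ≤ K0 * ((1 - Complex.abs (φ z) ^ 2) ^ (1 + 1/p)) := by
          rw [show K0 * ((1 - Complex.abs (φ z) ^ 2) ^ (1 + 1/p))
            = (1 - Complex.abs (φ z) ^ 2) ^ (1 + 1 / p) * K0 by ring] at *
          exact this
      _ = K0 * X := by rw [hXdef]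
  have hderterm : (Complex.abs (deriv (h ∘ φ) z) + Complex.abs (deriv (g ∘ φ) z)) * ω t
      ≤ C1 * K0 * N := by
    have hA : Complex.abs (deriv (h ∘ φ) z) + Complex.abs (deriv (g ∘ φ) z)
        = (Complex.abs (deriv h (φ z)) + Complex.abs (deriv g (φ z))) * Complex.abs (deriv φ z) := by
      rw [hch, hcg, map_mul, map_mul]
      ring
    rw [hA, mul_assoc]
    have hstep : (Complex.abs (deriv h (φ z)) + Complex.abs (deriv g (φ z))) *
        (Complex.abs (deriv φ z) * ω t) ≤ (C1 * N * X⁻¹) * (K0 * X) := by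
      apply mul_le_mul hder hb2
      · exact mul_nonneg (Complex.abs.nonneg _) hωt
      · positivity
    calc (Complex.abs (deriv h (φ z)) + Complex.abs (deriv g (φ z))) *
        (Complex.abs (deriv φ z) * ω t) ≤ (C1 * N * X⁻¹) * (K0 * X) := hstep
      _ = C1 * K0 * N * (X⁻¹ * X) := by ring
      _ = C1 * K0 * N := by rw [inv_mul_cancel₀ (ne_of_gt hXpos), mul_one]
  calc Complex.abs (h (φ 0) + (starRingEnd ℂ) (g (φ 0))) +
        (Complex.abs (deriv (h ∘ φ) z) + Complex.abs (deriv (g ∘ φ) z)) * ω t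
      ≤ C0 * N + C1 * K0 * N := add_le_add hval hderterm
    _ ≤ (C0 + C1 * K0 + 1) * N := by nlinarith
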